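/- Let A be a Galois ring GR(p^n, r) and let i be a natural number. If p is odd, or if p = 2 and n ≤ 2, then the set of p^i-th powers of elements of 1 + pA equals 1 + p^{i+1}A; that is, {(1 + p·a)^{p^i} : a ∈ A} = {1 + p^{i+1}·a : a ∈ A}. -/
import Mathlib


lemma aux_pow_expand {R : Type*} [CommRing R] {p : ℕ} (hp : p.Prime) (hodd : Odd p)
    (m : ℕ) (hm : 1 ≤ m) (u e : R) :
    (p : R) ^ (m + 2) ∣ (u + (p : R) ^ m * e) ^ p - u ^ p - (p : R) ^ (m + 1) * e * u ^ (p - 1) := by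
  have h3 : 3 ≤ p := by
    have h2 := hp.two_le
    have := Nat.odd_iff.mp hodd
    omega
  obtain ⟨q, rfl⟩ : ∃ q, p = q + 3 := ⟨p - 3, by omega⟩
  rw [add_pow]
  rw [show q + 3 + 1 = (q + 2) + 1 + 1 from rfl, Finset.sum_range_succ, Finset.sum_range_succ]
  have hsum : ((q + 3 : ℕ) : R) ^ (m + 2) ∣
      ∑ j ∈ Finset.range (q + 2),
        u ^ j * (((q + 3 : ℕ) : R) ^ m * e) ^ (q + 3 - j) * ((q + 3).choose j : R) := by
    apply Finset.dvd_sum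
    intro j hj
    simp only [Finset.mem_range] at hj
    rcases Nat.eq_zero_or_pos j with rfl | hj1
    · have hs : q + 3 - 0 = q + 3 := rfl
      have h1 : ((q + 3 : ℕ) : R) ^ (m + 2) ∣ ((q + 3 : ℕ) : R) ^ (m * (q + 3)) :=
        pow_dvd_pow _ (by nlinarith)
      rw [hs, mul_pow, ← pow_mul]
      exact ((h1.mul_right _).mul_left _).mul_right _
    · have hchoose : (q + 3) ∣ (q + 3).choose j :=
        hp.dvd_choose_self (by omega) (by omega)
      obtain ⟨t, ht⟩ := hchoose
      have hs : q + 3 - j = (q + 1 - j) + 2 := by omega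
      rw [hs, ht, mul_pow, ← pow_mul]
      rw [Nat.cast_mul]
      have h1 : ((q + 3 : ℕ) : R) ^ (m + 2) ∣ ((q + 3 : ℕ) : R) ^ (m * (q + 1 - j + 2)) * ((q+3:ℕ) : R) := by
        rw [← pow_succ]
        exact pow_dvd_pow _ (by nlinarith [Nat.le_of_lt_succ hj])
      calc ((q + 3 : ℕ) : R) ^ (m + 2) ∣ ((q + 3 : ℕ) : R) ^ (m * (q + 1 - j + 2)) * ((q+3:ℕ) : R) := h1
        _ ∣ u ^ j * (((q + 3 : ℕ) : R) ^ (m * (q + 1 - j + 2)) * e ^ (q + 1 - j + 2)) * (((q+3:ℕ):R) * (t:R)) := by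
            rw [show u ^ j * (((q + 3 : ℕ) : R) ^ (m * (q + 1 - j + 2)) * e ^ (q + 1 - j + 2)) * (((q+3:ℕ):R) * (t:R))
              = (((q + 3 : ℕ) : R) ^ (m * (q + 1 - j + 2)) * ((q+3:ℕ) : R)) * (u ^ j * e ^ (q + 1 - j + 2) * (t:R)) from by ring]
            exact Dvd.intro _ rfl
  obtain ⟨c, hc⟩ := hsum
  rw [hc]
  have hch1 : ((q + 3).choose (q + 2) : R) = ((q + 3 : ℕ) : R) := by
    rw [Nat.choose_succ_self_right]
  have hch2 : ((q + 3).choose (q + 3) : R) = 1 := by rw [Nat.choose_self]; norm_num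
  rw [hch1, hch2]
  refine ⟨c, ?_⟩
  have e1 : q + 3 - (q + 2) = 1 := by omega
  have e2 : q + 3 - (q + 3) = 0 := by omega
  have e3 : q + 3 - 1 = q + 2 := by omega
  rw [e1, e2, e3]
  push_cast
  ring

/-- Forward step: `(1 + p^k b)^p = 1 + p^(k+1) b'`. -/
lemma step_fwd {R : Type*} [CommRing R] {p : ℕ} (hp : p.Prime) (hodd : Odd p)
    {k : ℕ} (hk : 1 ≤ k) (b : R) :
    ∃ b' : R, (1 + (p : R) ^ k * b) ^ p = 1 + (p : R) ^ (k + 1) * b' := by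
  obtain ⟨c, hc⟩ := aux_pow_expand hp hodd k hk 1 b
  refine ⟨b + (p : R) * c, ?_⟩
  have : (1 + (p : R) ^ k * b) ^ p = 1 ^ p + (p:R)^(k+1) * b * 1 ^ (p-1) + (p:R)^(k+2) * c := by
    rw [add_comm (1:R)] at hc ⊢
    linear_combination hc
  rw [this]
  ring

/-- Hensel-type surjectivity step: every element of `1 + p^(k+1) A` is a `p`-th power
of an element of `1 + p^k A`, when `p` is odd and nilpotent. -/
lemma step_bwd {R : Type*} [CommRing R] {p : ℕ} (hp : p.Prime) (hodd : Odd p)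
    {k : ℕ} (hk : 1 ≤ k) {N : ℕ} (hnil : (p : R) ^ N = 0) (b : R) :
    ∃ a : R, (1 + (p : R) ^ k * a) ^ p = 1 + (p : R) ^ (k + 1) * b := by
  obtain ⟨k', rfl⟩ : ∃ k', k = k' + 1 := ⟨k - 1, by omega⟩
  suffices h : ∀ j, ∃ a d : R,
      (1 + (p : R) ^ (k' + 1) * a) ^ p = 1 + (p : R) ^ (k' + 2) * b + (p : R) ^ (k' + 2 + j) * d by
    obtain ⟨a, d, had⟩ := h N
    refine ⟨a, ?_⟩
    have hz : (p : R) ^ (k' + 2 + N) = 0 := by rw [pow_add, hnil, mul_zero]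
    rw [had, hz, zero_mul, add_zero]
  intro j
  induction j with
  | zero =>
    exact ⟨0, -b, by ring⟩
  | succ j ih =>
    obtain ⟨a, d, had⟩ := ih
    set u : R := 1 + (p : R) ^ (k' + 1) * a with hu
    -- u^(p-1) = 1 + p^(k'+1) * s
    have hdvd : (p : R) ^ (k' + 1) ∣ u ^ (p - 1) - 1 := by
      have h1 : u - 1 ∣ u ^ (p - 1) - 1 := by
        simpa using sub_dvd_pow_sub_pow u 1 (p - 1)
      refine dvd_trans ?_ h1
      exact ⟨a, by rw [hu]; ring⟩
    obtain ⟨s, hs⟩ := hdvd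
    obtain ⟨c, hc⟩ := aux_pow_expand hp hodd (k' + 1 + j) (by omega) u (-d)
    refine ⟨a - (p : R) ^ j * d, c - (p : R) ^ k' * (d * s), ?_⟩
    have hrw : 1 + (p : R) ^ (k' + 1) * (a - (p : R) ^ j * d)
        = u + (p : R) ^ (k' + 1 + j) * (-d) := by rw [hu]; ring
    rw [hrw]
    have hup : u ^ (p - 1) = 1 + (p:R)^(k'+1) * s := by linear_combination hs
    have hexp : (u + (p : R) ^ (k' + 1 + j) * (-d)) ^ p
        = u ^ p + (p : R) ^ (k' + 1 + j + 1) * (-d) * u ^ (p-1) + (p : R) ^ (k' + 1 + j + 2) * c := by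
      linear_combination hc
    rw [hexp, had, hup]
    ring

/-- **`p^i`-th powers of `1 + pA`.** If `A = GR(p^n, r)` is a Galois ring and `p` is odd,
or `p = 2` and `n ≤ 2`, then the set of `p^i`-th powers of elements of `1 + pA` is
exactly `1 + p^(i+1)A`. -/
theorem onePlusP_pow_p (p n r : ℕ) (i : ℕ) (hp : p.Prime) (hn : 0 < n) (hr : 0 < r)
    (A : Type) [CommRing A] [Fintype A] [IsLocalRing A]
    (hchar : CharP A (p ^ n))
    (hmax : IsLocalRing.maximalIdeal A = Ideal.span {(p : A)})
    (hres : Nat.card (IsLocalRing.ResidueField A) = p ^ r)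
    (hodd : Odd p ∨ (p = 2 ∧ n ≤ 2)) :
    {x : A | ∃ a : A, x = (1 + p * a) ^ p ^ i} = {x : A | ∃ a : A, x = 1 + (p : A) ^ (i + 1) * a} := by
  have hpn : (p : A) ^ n = 0 := by
    have h := (CharP.cast_eq_zero_iff A (p ^ n) (p ^ n)).mpr dvd_rfl
    push_cast at h
    exact h
  rcases hodd with hodd | ⟨rfl, hn2⟩
  · -- p odd
    induction i with
    | zero =>
      ext x
      simp only [Set.mem_setOf_eq, pow_zero, pow_one, zero_add]
    | succ i ih =>
      ext x
      simp only [Set.mem_setOf_eq]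
      constructor
      · rintro ⟨a, rfl⟩
        have hmem : (1 + (p : A) * a) ^ p ^ i ∈ {x : A | ∃ a : A, x = (1 + p * a) ^ p ^ i} :=
          ⟨a, rfl⟩
        rw [ih] at hmem
        obtain ⟨b, hb⟩ := hmem
        obtain ⟨b', hb'⟩ := step_fwd (R := A) hp hodd (k := i + 1) (by omega) b
        refine ⟨b', ?_⟩
        conv_lhs => rw [pow_succ, pow_mul]
        rw [hb, hb']
      · rintro ⟨b, rfl⟩
        obtain ⟨a', ha'⟩ := step_bwd (R := A) hp hodd (k := i + 1) (by omega) hpn b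
        have hmem : (1 : A) + (p : A) ^ (i + 1) * a'
            ∈ {x : A | ∃ a : A, x = 1 + (p : A) ^ (i + 1) * a} := ⟨a', rfl⟩
        rw [← ih] at hmem
        obtain ⟨a, ha⟩ := hmem
        refine ⟨a, ?_⟩
        have h2 : (1 + (p : A) * a) ^ p ^ (i + 1) = 1 + (p : A) ^ (i + 1 + 1) * b := by
          conv_lhs => rw [pow_succ, pow_mul]
          rw [← ha, ha']
        exact h2.symm
  · -- p = 2, n ≤ 2
    have h4 : (2 : A) ^ 2 = 0 := by
      have h := (CharP.cast_eq_zero_iff A (2 ^ n) 4).mpr (by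
        have : n ≤ 2 := hn2
        interval_cases n <;> norm_num)
      have : ((4 : ℕ) : A) = (2 : A) ^ 2 := by norm_num
      rw [this] at h
      exact h
    match i with
    | 0 =>
      ext x
      simp only [Set.mem_setOf_eq, pow_zero, pow_one, zero_add]
    | (i + 1) =>
      have hL : ∀ a : A, (1 + (2 : A) * a) ^ 2 ^ (i + 1) = 1 := by
        intro a
        have hsq : (1 + (2 : A) * a) ^ 2 = 1 := by
          have : (1 + (2 : A) * a) ^ 2 = 1 + (2 : A) ^ 2 * (a + a * a) := by ring
          rw [this, h4, zero_mul, add_zero]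
        rw [pow_succ, mul_comm (2 ^ i) 2, pow_mul, hsq, one_pow]
      have hR : (2 : A) ^ (i + 1 + 1) = 0 := by
        rw [show i + 1 + 1 = 2 + i from by omega, pow_add, h4, zero_mul]
      ext x
      simp only [Set.mem_setOf_eq]
      constructor
      · rintro ⟨a, rfl⟩
        refine ⟨0, ?_⟩
        push_cast
        rw [hL a, hR, zero_mul, add_zero]
      · rintro ⟨b, rfl⟩
        refine ⟨0, ?_⟩
        push_cast
        rw [hR, zero_mul, add_zero, hL 0]
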